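/- (Bretagnolle–Huber inequality) For any two probability measures P and Q on the same measurable space, the total variation distance satisfies TV(P,Q) ≤ √(1 − exp(−KL(Q‖P))). -/

import Mathlib

open MeasureTheory Real

/-- Bretagnolle–Huber inequality: the total variation distance
(sup over measurable sets of |P(A) − Q(A)|) is bounded by
√(1 − exp(−KL(Q‖P))), where KL(Q‖P) = ∫ llr dQ for Q ≪ P. -/
theorem bretagnolle_huber
    {α : Type*} [MeasurableSpace α]
    (P Q : Measure α) [IsProbabilityMeasure P] [IsProbabilityMeasure Q]
    (hQP : Q ≪ P) (h_int : Integrable (llr Q P) Q)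
    (A : Set α) (hA : MeasurableSet A) :
    |(P A).toReal - (Q A).toReal| ≤
      Real.sqrt (1 - Real.exp (-(∫ x, llr Q P x ∂Q))) := by
  classical
  set f : α → ℝ := fun x ↦ (Q.rnDeriv P x).toReal with hf_def
  have hf_meas : Measurable f := (Measure.measurable_rnDeriv Q P).ennreal_toReal
  have hf_nonneg : ∀ x, 0 ≤ f x := fun x ↦ ENNReal.toReal_nonneg
  have hf_int : Integrable f P := Measure.integrable_toReal_rnDeriv
  have hf_one : ∫ x, f x ∂P = 1 := by
    rw [hf_def, Measure.integral_toReal_rnDeriv hQP]; simp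
  have hmin_int : Integrable (fun x ↦ min (f x) 1) P := hf_int.inf (integrable_const 1)
  have hmax_int : Integrable (fun x ↦ max (f x) 1) P := hf_int.sup (integrable_const 1)
  set m := ∫ x, min (f x) 1 ∂P with hm_def
  set M := ∫ x, max (f x) 1 ∂P with hM_def
  have hm_nonneg : 0 ≤ m := integral_nonneg fun x ↦ le_min (hf_nonneg x) one_pos.le
  have hm_le_one : m ≤ 1 := by
    have : ∫ x, min (f x) 1 ∂P ≤ ∫ _x, (1:ℝ) ∂P :=
      integral_mono hmin_int (integrable_const 1) fun x ↦ min_le_right _ _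
    simpa using this
  have hM_nonneg : 0 ≤ M := integral_nonneg fun x ↦ le_trans one_pos.le (le_max_right _ _)
  have hmM : m + M = 2 := by
    have h : ∀ x, min (f x) 1 + max (f x) 1 = f x + 1 := fun x ↦ min_add_max _ _
    have : m + M = ∫ x, (f x + 1) ∂P := by
      rw [hm_def, hM_def, ← integral_add hmin_int hmax_int]
      exact integral_congr_ae (Filter.Eventually.of_forall fun x ↦ h x)
    rw [this, integral_add hf_int (integrable_const 1), hf_one]
    simp
    norm_num
  -- √f is integrable
  have hsqrt_le : ∀ x, Real.sqrt (f x) ≤ max (f x) 1 := by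
    intro x
    rcases le_total (f x) 1 with h | h
    · refine le_trans ?_ (le_max_right _ _)
      rw [show (1:ℝ) = Real.sqrt 1 by simp]
      exact Real.sqrt_le_sqrt h
    · refine le_trans ?_ (le_max_left _ _)
      have hs := Real.sq_sqrt (hf_nonneg x)
      nlinarith [sq_nonneg (Real.sqrt (f x) - 1), Real.sqrt_nonneg (f x)]
  have hsqrt_int : Integrable (fun x ↦ Real.sqrt (f x)) P := by
    refine hmax_int.mono' (hf_meas.sqrt.aestronglyMeasurable) ?_
    refine Filter.Eventually.of_forall fun x ↦ ?_
    rw [Real.norm_of_nonneg (Real.sqrt_nonneg _)]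
    exact hsqrt_le x
  set ρ := ∫ x, Real.sqrt (f x) ∂P with hρ_def
  -- Cauchy–Schwarz : ρ ≤ √m * √M
  have hCS : ρ ≤ Real.sqrt m * Real.sqrt M := by
    have hpq : Real.HolderConjugate 2 2 := Real.holderConjugate_iff.mpr ⟨one_lt_two, by norm_num⟩
    have hmin_sqrt_meas : AEStronglyMeasurable (fun x ↦ Real.sqrt (min (f x) 1)) P :=
      ((hf_meas.min measurable_const).sqrt).aestronglyMeasurable
    have hmax_sqrt_meas : AEStronglyMeasurable (fun x ↦ Real.sqrt (max (f x) 1)) P :=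
      ((hf_meas.max measurable_const).sqrt).aestronglyMeasurable
    have h2 : (ENNReal.ofReal 2) = 2 := by norm_num
    have hmem1 : MemLp (fun x ↦ Real.sqrt (min (f x) 1)) (ENNReal.ofReal 2) P := by
      rw [h2, memLp_two_iff_integrable_sq hmin_sqrt_meas]
      refine hmin_int.congr ?_
      refine Filter.Eventually.of_forall fun x ↦ ?_
      show f x ⊓ 1 = Real.sqrt (f x ⊓ 1) ^ 2
      rw [sq, Real.mul_self_sqrt (le_min (hf_nonneg x) one_pos.le)]
    have hmem2 : MemLp (fun x ↦ Real.sqrt (max (f x) 1)) (ENNReal.ofReal 2) P := by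
      rw [h2, memLp_two_iff_integrable_sq hmax_sqrt_meas]
      refine hmax_int.congr ?_
      refine Filter.Eventually.of_forall fun x ↦ ?_
      show f x ⊔ 1 = Real.sqrt (f x ⊔ 1) ^ 2
      rw [sq, Real.mul_self_sqrt (le_trans one_pos.le (le_max_right _ _))]
    have := integral_mul_le_Lp_mul_Lq_of_nonneg hpq
      (Filter.Eventually.of_forall fun x ↦ Real.sqrt_nonneg (min (f x) 1))
      (Filter.Eventually.of_forall fun x ↦ Real.sqrt_nonneg (max (f x) 1))
      hmem1 hmem2
    have hprod : ∀ x, Real.sqrt (min (f x) 1) * Real.sqrt (max (f x) 1) = Real.sqrt (f x) := by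
      intro x
      rw [← Real.sqrt_mul (le_min (hf_nonneg x) one_pos.le)]
      congr 1
      rcases le_total (f x) 1 with h | h
      · rw [min_eq_left h, max_eq_right h, mul_one]
      · rw [min_eq_right h, max_eq_left h, one_mul]
    have hl : ∫ x, Real.sqrt (min (f x) 1) * Real.sqrt (max (f x) 1) ∂P = ρ :=
      integral_congr_ae (Filter.Eventually.of_forall fun x ↦ hprod x)
    have hr1 : ∫ x, Real.sqrt (min (f x) 1) ^ (2:ℝ) ∂P = m := by
      refine integral_congr_ae (Filter.Eventually.of_forall fun x ↦ ?_)
      show Real.sqrt (f x ⊓ 1) ^ (2:ℝ) = f x ⊓ 1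
      rw [show ((2:ℝ)) = ((2:ℕ):ℝ) by norm_num, Real.rpow_natCast, sq,
        Real.mul_self_sqrt (le_min (hf_nonneg x) one_pos.le)]
    have hr2 : ∫ x, Real.sqrt (max (f x) 1) ^ (2:ℝ) ∂P = M := by
      refine integral_congr_ae (Filter.Eventually.of_forall fun x ↦ ?_)
      show Real.sqrt (f x ⊔ 1) ^ (2:ℝ) = f x ⊔ 1
      rw [show ((2:ℝ)) = ((2:ℕ):ℝ) by norm_num, Real.rpow_natCast, sq,
        Real.mul_self_sqrt (le_trans one_pos.le (le_max_right _ _))]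
    rw [hl, hr1, hr2] at this
    calc ρ ≤ m ^ ((1:ℝ)/2) * M ^ ((1:ℝ)/2) := this
      _ = Real.sqrt m * Real.sqrt M := by
          rw [Real.sqrt_eq_rpow m, Real.sqrt_eq_rpow M]
  -- change of measure : ρ = ∫ exp (-llr/2) dQ
  have hkey : ∀ x, f x • Real.exp (-(llr Q P x) / 2) = Real.sqrt (f x) := by
    intro x
    rcases eq_or_lt_of_le (hf_nonneg x) with h | h
    · simp [← h]
    · have hllr : llr Q P x = Real.log (f x) := rfl
      rw [hllr, smul_eq_mul]
      have h1 : -(Real.log (f x)) / 2 = Real.log ((Real.sqrt (f x))⁻¹) := by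
        rw [Real.log_inv, Real.log_sqrt (hf_nonneg x)]; ring
      rw [h1, Real.exp_log (by positivity)]
      have hs : Real.sqrt (f x) ≠ 0 := ne_of_gt (Real.sqrt_pos.mpr h)
      field_simp
      exact (Real.sq_sqrt (hf_nonneg x)).symm
  have hchange : ∫ x, Real.exp (-(llr Q P x) / 2) ∂Q = ρ := by
    rw [hρ_def, ← MeasureTheory.integral_rnDeriv_smul hQP]
    exact integral_congr_ae (Filter.Eventually.of_forall fun x ↦ hkey x)
  have hexp_int : Integrable (fun x ↦ Real.exp (-(llr Q P x) / 2)) Q := by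
    rw [← MeasureTheory.integrable_rnDeriv_smul_iff hQP]
    refine hsqrt_int.congr ?_
    exact Filter.Eventually.of_forall fun x ↦ (hkey x).symm
  -- Jensen : exp(-KL/2) ≤ ρ
  have hJensen : Real.exp (-(∫ x, llr Q P x ∂Q) / 2) ≤ ρ := by
    have hconv : ConvexOn ℝ Set.univ Real.exp := convexOn_exp
    have hint1 : Integrable (fun x ↦ -(llr Q P x) / 2) Q := (h_int.neg).div_const 2
    have := hconv.map_integral_le (continuous_exp.continuousOn) isClosed_univ
      (Filter.Eventually.of_forall fun x ↦ Set.mem_univ _) hint1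
      (by exact hexp_int)
    rw [hchange] at this
    have heq : ∫ x, -(llr Q P x) / 2 ∂Q = -(∫ x, llr Q P x ∂Q) / 2 := by
      rw [integral_div, integral_neg]
    rw [heq] at this
    exact this
  have hρ_nonneg : 0 ≤ ρ := integral_nonneg fun x ↦ Real.sqrt_nonneg _
  -- exp(-KL) ≤ m * M
  have hexp_le : Real.exp (-(∫ x, llr Q P x ∂Q)) ≤ m * M := by
    have h1 : Real.exp (-(∫ x, llr Q P x ∂Q)) = Real.exp (-(∫ x, llr Q P x ∂Q) / 2) ^ 2 := by
      rw [← Real.exp_nat_mul]; ring_nf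
    have h2 : Real.exp (-(∫ x, llr Q P x ∂Q) / 2) ^ 2 ≤ ρ ^ 2 :=
      pow_le_pow_left₀ (Real.exp_pos _).le hJensen 2
    have h3 : ρ ^ 2 ≤ (Real.sqrt m * Real.sqrt M) ^ 2 := pow_le_pow_left₀ hρ_nonneg hCS 2
    have h4 : (Real.sqrt m * Real.sqrt M) ^ 2 = m * M := by
      rw [mul_pow, Real.sq_sqrt hm_nonneg, Real.sq_sqrt hM_nonneg]
    calc Real.exp (-(∫ x, llr Q P x ∂Q)) = _ := h1
      _ ≤ ρ ^ 2 := h2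
      _ ≤ _ := h3
      _ = m * M := h4
  -- |P A - Q A| ≤ 1 - m
  have hPA : (P A).toReal = ∫ _x in A, (1:ℝ) ∂P := by
    rw [setIntegral_const, smul_eq_mul, mul_one]; rfl
  have hQA : (Q A).toReal = ∫ x in A, f x ∂P := (Measure.setIntegral_toReal_rnDeriv hQP A).symm
  have habs : |(P A).toReal - (Q A).toReal| ≤ 1 - m := by
    rw [abs_sub_le_iff]
    constructor
    · rw [hPA, hQA, ← integral_sub (integrable_const 1).integrableOn hf_int.integrableOn]
      have hle : ∫ x in A, ((1:ℝ) - f x) ∂P ≤ ∫ x in A, (1 - min (f x) 1) ∂P := by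
        refine setIntegral_mono ((integrable_const 1).integrableOn.sub hf_int.integrableOn)
          ((integrable_const 1).integrableOn.sub hmin_int.integrableOn) fun x ↦ ?_
        exact sub_le_sub_left (min_le_left _ _) 1
      have hle2 : ∫ x in A, ((1:ℝ) - min (f x) 1) ∂P ≤ ∫ x, ((1:ℝ) - min (f x) 1) ∂P := by
        refine setIntegral_le_integral ((integrable_const 1).sub hmin_int) ?_
        exact Filter.Eventually.of_forall fun x ↦ sub_nonneg.mpr (min_le_right _ _)
      have heq : ∫ x, ((1:ℝ) - min (f x) 1) ∂P = 1 - m := by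
        rw [integral_sub (integrable_const 1) hmin_int]; simp [hm_def]
      linarith
    · rw [hPA, hQA, ← integral_sub hf_int.integrableOn (integrable_const 1).integrableOn]
      have hle : ∫ x in A, (f x - 1) ∂P ≤ ∫ x in A, (max (f x) 1 - 1) ∂P := by
        refine setIntegral_mono (hf_int.integrableOn.sub (integrable_const 1).integrableOn)
          (hmax_int.integrableOn.sub (integrable_const 1).integrableOn) fun x ↦ ?_
        exact sub_le_sub_right (le_max_left _ _) 1
      have hle2 : ∫ x in A, (max (f x) 1 - 1) ∂P ≤ ∫ x, (max (f x) 1 - 1) ∂P := by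
        refine setIntegral_le_integral (hmax_int.sub (integrable_const 1)) ?_
        exact Filter.Eventually.of_forall fun x ↦ sub_nonneg.mpr (le_max_right _ _)
      have heq : ∫ x, (max (f x) 1 - 1) ∂P = M - 1 := by
        rw [integral_sub hmax_int (integrable_const 1)]; simp [hM_def]
      linarith
  -- conclude
  have hsq : (1 - m) ^ 2 ≤ 1 - Real.exp (-(∫ x, llr Q P x ∂Q)) := by
    have : m * M = m * (2 - m) := by rw [show M = 2 - m by linarith]
    nlinarith [hexp_le]
  calc |(P A).toReal - (Q A).toReal| ≤ 1 - m := habs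
    _ = Real.sqrt ((1 - m) ^ 2) := by rw [Real.sqrt_sq (by linarith)]
    _ ≤ Real.sqrt (1 - Real.exp (-(∫ x, llr Q P x ∂Q))) := Real.sqrt_le_sqrt hsq
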